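/- arXiv:1305.4667 — 2 statements merged into one kernel-verified Lean document; each statement's English description precedes it below -/
import Mathlib

section
/- In the ring R = ℤ[w,z]/(w² - 2w, wz - 2w), every element can be written uniquely in the form λw + P(z) where λ ∈ ℤ and P is a polynomial with integer coefficients; that is, R is a free ℤ-module with basis {w, 1, z, z², z³, ...}. -/
open MvPolynomial

noncomputable def SWFIdeal : Ideal (MvPolynomial (Fin 2) ℤ) :=
  Ideal.span {(X 0 : MvPolynomial (Fin 2) ℤ) ^ 2 - 2 * X 0,
    (X 0 : MvPolynomial (Fin 2) ℤ) * X 1 - 2 * X 0}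

abbrev SWFRing : Type := MvPolynomial (Fin 2) ℤ ⧸ SWFIdeal

noncomputable def w : SWFRing := Ideal.Quotient.mk SWFIdeal (X 0)
noncomputable def z : SWFRing := Ideal.Quotient.mk SWFIdeal (X 1)

namespace SWFAux

lemma hw2 : w ^ 2 = 2 * w := by
  have : Ideal.Quotient.mk SWFIdeal ((X 0 : MvPolynomial (Fin 2) ℤ) ^ 2 - 2 * X 0) = 0 := by
    rw [Ideal.Quotient.eq_zero_iff_mem, SWFIdeal]
    exact Ideal.subset_span (by simp)
  have h := sub_eq_zero.mp (by simpa using this)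
  rw [w, h, map_ofNat]

lemma hwz : w * z = 2 * w := by
  have : Ideal.Quotient.mk SWFIdeal ((X 0 : MvPolynomial (Fin 2) ℤ) * X 1 - 2 * X 0) = 0 := by
    rw [Ideal.Quotient.eq_zero_iff_mem, SWFIdeal]
    exact Ideal.subset_span (by simp)
  have h := sub_eq_zero.mp (by simpa using this)
  rw [w, z, h, map_ofNat]

noncomputable def gmap : SWFRing →+* Polynomial ℤ :=
  Ideal.Quotient.lift SWFIdeal
    (eval₂Hom (Int.castRingHom (Polynomial ℤ)) ![0, Polynomial.X]) (by
      intro a ha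
      have hle : SWFIdeal ≤ RingHom.ker (eval₂Hom (Int.castRingHom (Polynomial ℤ)) ![0, Polynomial.X]) := by
        rw [SWFIdeal, Ideal.span_le]
        rintro p hp
        simp only [Set.mem_insert_iff, Set.mem_singleton_iff] at hp
        rcases hp with rfl | rfl <;> simp [RingHom.mem_ker]
      exact (RingHom.mem_ker).mp (hle ha))

noncomputable def fmap : SWFRing →+* ℤ :=
  Ideal.Quotient.lift SWFIdeal
    (eval₂Hom (RingHom.id ℤ) ![2, 2]) (by
      intro a ha
      have hle : SWFIdeal ≤ RingHom.ker (eval₂Hom (RingHom.id ℤ) ![2, 2]) := by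
        rw [SWFIdeal, Ideal.span_le]
        rintro p hp
        simp only [Set.mem_insert_iff, Set.mem_singleton_iff] at hp
        rcases hp with rfl | rfl <;> simp [RingHom.mem_ker]
      exact (RingHom.mem_ker).mp (hle ha))

@[simp] lemma gmap_w : gmap w = 0 := by simp [gmap, w]
@[simp] lemma gmap_z : gmap z = Polynomial.X := by simp [gmap, z]
@[simp] lemma fmap_w : fmap w = 2 := by simp [fmap, w]
@[simp] lemma fmap_z : fmap z = 2 := by simp [fmap, z]

@[simp] lemma gmap_aeval (P : Polynomial ℤ) : gmap (Polynomial.aeval z P) = P := by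
  induction P using Polynomial.induction_on with
  | C a => simp [Polynomial.aeval_C, map_intCast]
  | add p q hp hq => simp [hp, hq]
  | monomial n a h => simp_all [pow_succ, ← mul_assoc]

@[simp] lemma fmap_aeval (P : Polynomial ℤ) : fmap (Polynomial.aeval z P) = P.eval 2 := by
  induction P using Polynomial.induction_on with
  | C a => simp [Polynomial.aeval_C, map_intCast]
  | add p q hp hq => simp [hp, hq]
  | monomial n a h => simp_all [pow_succ, ← mul_assoc]

lemma w_zpow (n : ℕ) : w * z ^ n = 2 ^ n * w := by
  induction n with
  | zero => simp
  | succ n ih =>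
      calc w * z ^ (n+1) = (w * z ^ n) * z := by ring
        _ = 2 ^ n * w * z := by rw [ih]
        _ = 2 ^ n * (w * z) := by ring
        _ = 2 ^ n * (2 * w) := by rw [hwz]
        _ = 2 ^ (n+1) * w := by ring

lemma w_aeval (P : Polynomial ℤ) : w * Polynomial.aeval z P = (P.eval 2 : ℤ) * w := by
  induction P using Polynomial.induction_on with
  | C a => simp [mul_comm]
  | add p q hp hq => rw [map_add, mul_add, hp, hq, Polynomial.eval_add]; push_cast; ring
  | monomial n a h =>
      simp only [map_mul, map_pow, Polynomial.aeval_C, Polynomial.aeval_X,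
        Polynomial.eval_mul, Polynomial.eval_pow, Polynomial.eval_C, Polynomial.eval_X,
        algebraMap_int_eq, eq_intCast, map_intCast, Polynomial.eval_intCast]
      have : w * ((a : SWFRing) * z ^ (n+1)) = (a : SWFRing) * (w * z ^ (n+1)) := by ring
      rw [this, w_zpow]
      push_cast
      ring

lemma exists_rep (x : SWFRing) :
    ∃ lam : ℤ, ∃ P : Polynomial ℤ, x = (lam : SWFRing) * w + Polynomial.aeval z P := by
  obtain ⟨q, rfl⟩ := Ideal.Quotient.mk_surjective (I := SWFIdeal) x
  induction q using MvPolynomial.induction_on with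
  | C a =>
      exact ⟨0, Polynomial.C a, by simp [Polynomial.aeval_C]⟩
  | add p q hp hq =>
      obtain ⟨l1, P1, h1⟩ := hp
      obtain ⟨l2, P2, h2⟩ := hq
      refine ⟨l1 + l2, P1 + P2, ?_⟩
      simp [map_add, h1, h2]
      ring
  | mul_X p i hp =>
      obtain ⟨l, P, h⟩ := hp
      fin_cases i
      · show ∃ lam : ℤ, ∃ Q : Polynomial ℤ, (Ideal.Quotient.mk SWFIdeal) (p * X 0) = ((lam : ℤ) : SWFRing) * w + Polynomial.aeval z Q
        refine ⟨2 * l + P.eval 2, 0, ?_⟩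
        have : Ideal.Quotient.mk SWFIdeal (p * X 0) = ((l : SWFRing) * w + Polynomial.aeval z P) * w := by
          rw [map_mul, h]; rfl
        rw [this, add_mul, mul_assoc, ← pow_two, hw2, mul_comm (Polynomial.aeval z P) w, w_aeval, map_zero]
        push_cast
        ring
      · show ∃ lam : ℤ, ∃ Q : Polynomial ℤ, (Ideal.Quotient.mk SWFIdeal) (p * X 1) = ((lam : ℤ) : SWFRing) * w + Polynomial.aeval z Q
        refine ⟨2 * l, P * Polynomial.X, ?_⟩
        have : Ideal.Quotient.mk SWFIdeal (p * X 1) = ((l : SWFRing) * w + Polynomial.aeval z P) * z := by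
          rw [map_mul, h]; rfl
        rw [this, add_mul, mul_assoc, hwz, map_mul, Polynomial.aeval_X]
        push_cast
        ring

end SWFAux

open SWFAux

/-- Every element of `R = ℤ[w,z]/(w² - 2w, wz - 2w)` is uniquely of the form
`λ·w + P(z)` with `λ ∈ ℤ` and `P ∈ ℤ[z]`; i.e. `R` is free over `ℤ` with basis
`{w, 1, z, z², ...}`. -/
theorem stmt_4 (x : SWFRing) :
    ∃! p : ℤ × Polynomial ℤ, x = (p.1 : SWFRing) * w + Polynomial.aeval z p.2 := by
  obtain ⟨lam, P, h⟩ := exists_rep x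
  refine ⟨(lam, P), h, ?_⟩
  rintro ⟨mu, Q⟩ hq
  have hP : P = Q := by
    have := congrArg gmap (h.symm.trans hq)
    simpa [map_intCast] using this
  have hl : mu = lam := by
    have := congrArg fmap (h.symm.trans hq)
    simp [map_intCast, ← hP] at this
    omega
  simp [← hP, hl]
end

section
/- In the ring R = ℤ[w,z]/(w² - 2w, wz - 2w), an element of the principal ideal (z^k) is a ℤ-multiple of w if and only if it is of the form λ·2^k·w for some λ ∈ ℤ. Consequently, if 2^m·w ∈ (z^k) with m ≥ 0, then m ≥ k. -/
open MvPolynomial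

/-- The map `R → ℤ[X]` sending `w ↦ 0`, `z ↦ X`. -/
noncomputable def SWFphi : SWFRing →+* Polynomial ℤ :=
  Ideal.Quotient.lift SWFIdeal
    (eval₂Hom (Int.castRingHom (Polynomial ℤ))
      (fun i => if i = 0 then 0 else Polynomial.X))
    (by
      intro a ha
      have h : SWFIdeal ≤ RingHom.ker (eval₂Hom (Int.castRingHom (Polynomial ℤ))
          (fun i => if i = 0 then 0 else Polynomial.X)) := by
        rw [SWFIdeal, Ideal.span_le]
        rintro p (rfl | rfl) <;> simp [RingHom.mem_ker]
      exact RingHom.mem_ker.mp (h ha))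

/-- The map `R → ℤ` sending `w ↦ 2`, `z ↦ 2`. -/
noncomputable def SWFpsi : SWFRing →+* ℤ :=
  Ideal.Quotient.lift SWFIdeal
    (eval₂Hom (RingHom.id ℤ) (fun _ => 2))
    (by
      intro a ha
      have h : SWFIdeal ≤ RingHom.ker (eval₂Hom (RingHom.id ℤ) (fun _ : Fin 2 => 2)) := by
        rw [SWFIdeal, Ideal.span_le]
        rintro p (rfl | rfl) <;> simp [RingHom.mem_ker]
      exact RingHom.mem_ker.mp (h ha))

/-- The map `ℤ[X] → R` sending `X ↦ z`. -/
noncomputable def SWFtheta : Polynomial ℤ →+* SWFRing :=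
  Polynomial.eval₂RingHom (Int.castRingHom SWFRing) z

lemma SWFphi_w : SWFphi w = 0 := by
  simp [SWFphi, w]

lemma SWFphi_z : SWFphi z = Polynomial.X := by
  simp [SWFphi, z]

lemma SWFpsi_w : SWFpsi w = 2 := by
  simp [SWFpsi, w]

lemma SWFpsi_z : SWFpsi z = 2 := by
  simp [SWFpsi, z]

lemma SWF_ww : w * w = 2 * w := by
  have h : Ideal.Quotient.mk SWFIdeal ((X 0 : MvPolynomial (Fin 2) ℤ) ^ 2 - 2 * X 0) = 0 :=
    Ideal.Quotient.eq_zero_iff_mem.mpr (Ideal.subset_span (Or.inl rfl))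
  have h2 : w * w - 2 * w = 0 := by
    have := h
    simp only [map_sub, map_mul, map_pow, map_ofNat] at this
    simpa [w, sq] using this
  linear_combination h2

lemma SWF_zw : z * w = 2 * w := by
  have h : Ideal.Quotient.mk SWFIdeal ((X 0 : MvPolynomial (Fin 2) ℤ) * X 1 - 2 * X 0) = 0 :=
    Ideal.Quotient.eq_zero_iff_mem.mpr (Ideal.subset_span (Or.inr rfl))
  have h2 : w * z - 2 * w = 0 := by
    have := h
    simp only [map_sub, map_mul, map_ofNat] at this
    simpa [w, z] using this
  linear_combination h2

lemma SWF_zpow_w (n : ℕ) : z ^ n * w = 2 ^ n * w := by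
  induction n with
  | zero => simp
  | succ n ih =>
    rw [pow_succ, pow_succ, mul_assoc]
    calc z ^ n * (z * w) = z ^ n * (2 * w) := by rw [SWF_zw]
    _ = 2 * (z ^ n * w) := by ring
    _ = 2 * (2 ^ n * w) := by rw [ih]
    _ = 2 ^ n * 2 * w := by ring

lemma SWFtheta_mul_w (q : Polynomial ℤ) :
    SWFtheta q * w = ((q.eval 2 : ℤ) : SWFRing) * w := by
  induction q using Polynomial.induction_on' with
  | add p r hp hr =>
    rw [map_add, add_mul, hp, hr, Polynomial.eval_add]
    push_cast
    ring
  | monomial n a =>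
    rw [SWFtheta, Polynomial.coe_eval₂RingHom, Polynomial.eval₂_monomial,
      Polynomial.eval_monomial]
    simp only [eq_intCast]
    push_cast
    rw [mul_assoc, SWF_zpow_w]
    ring

lemma SWFphi_theta (q : Polynomial ℤ) : SWFphi (SWFtheta q) = q := by
  rw [SWFtheta, Polynomial.coe_eval₂RingHom, Polynomial.hom_eval₂, SWFphi_z]
  rw [Subsingleton.elim (SWFphi.comp (Int.castRingHom SWFRing)) (Polynomial.C : ℤ →+* Polynomial ℤ)]
  exact Polynomial.eval₂_C_X

lemma SWFpsi_theta (q : Polynomial ℤ) : SWFpsi (SWFtheta q) = q.eval 2 := by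
  rw [SWFtheta, Polynomial.coe_eval₂RingHom, Polynomial.hom_eval₂, SWFpsi_z]
  rw [Subsingleton.elim (SWFpsi.comp (Int.castRingHom SWFRing)) (RingHom.id ℤ)]
  rfl

lemma SWF_exists_rep (x : SWFRing) :
    ∃ (c : ℤ) (q : Polynomial ℤ), x = (c : SWFRing) * w + SWFtheta q := by
  obtain ⟨p, rfl⟩ := Ideal.Quotient.mk_surjective x
  induction p using MvPolynomial.induction_on with
  | C a =>
    refine ⟨0, Polynomial.C a, ?_⟩
    simp [SWFtheta]
  | add p r hp hr =>
    obtain ⟨c1, q1, h1⟩ := hp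
    obtain ⟨c2, q2, h2⟩ := hr
    refine ⟨c1 + c2, q1 + q2, ?_⟩
    rw [map_add, h1, h2, map_add]
    push_cast
    ring
  | mul_X p i hp =>
    obtain ⟨c, q, h⟩ := hp
    have hi : i = 0 ∨ i = 1 := by
      rcases i with ⟨iv, hiv⟩
      interval_cases iv
      · exact Or.inl rfl
      · exact Or.inr rfl
    rcases hi with rfl | rfl
    · refine ⟨2 * c + q.eval 2, 0, ?_⟩
      have hmk : Ideal.Quotient.mk SWFIdeal (p * X 0) = Ideal.Quotient.mk SWFIdeal p * w := by
        rw [map_mul]; rfl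
      rw [hmk, h, add_mul, SWFtheta_mul_w, mul_assoc, SWF_ww, map_zero]
      push_cast
      ring
    · refine ⟨2 * c, q * Polynomial.X, ?_⟩
      have hmk : Ideal.Quotient.mk SWFIdeal (p * X 1) = Ideal.Quotient.mk SWFIdeal p * z := by
        rw [map_mul]; rfl
      rw [hmk, h, add_mul, map_mul]
      have hz : SWFtheta Polynomial.X = z := by simp [SWFtheta]
      rw [hz, mul_assoc, mul_comm w z, SWF_zw]
      push_cast
      ring

lemma SWF_mem_span_zpow {k : ℕ} {x : SWFRing} (hx : x ∈ Ideal.span {z ^ k})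
    (hphi : SWFphi x = 0) : ∃ c : ℤ, x = (c : SWFRing) * 2 ^ k * w := by
  rw [Ideal.mem_span_singleton] at hx
  obtain ⟨y, hy⟩ := hx
  obtain ⟨c, q, rfl⟩ := SWF_exists_rep y
  have hphix : SWFphi x = Polynomial.X ^ k * q := by
    rw [hy, map_mul, map_pow, SWFphi_z, map_add, map_mul, SWFphi_w, SWFphi_theta]
    simp
  rw [hphix] at hphi
  have hq : q = 0 := by
    rcases mul_eq_zero.mp hphi with h | h
    · exact absurd h (pow_ne_zero k Polynomial.X_ne_zero)
    · exact h
  refine ⟨c, ?_⟩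
  rw [hy, hq, map_zero, add_zero]
  rw [show z ^ k * ((c : SWFRing) * w) = (c : SWFRing) * (z ^ k * w) by ring, SWF_zpow_w]
  ring

/-- In `R = ℤ[w,z]/(w² - 2w, wz - 2w)`, an element of `(z^k)` is a `ℤ`-multiple of `w`
iff it is of the form `λ·2^k·w`; consequently `2^m·w ∈ (z^k)` forces `m ≥ k`. -/
theorem stmt_5 (k : ℕ) :
    (∀ x ∈ Ideal.span {z ^ k}, (∃ c : ℤ, x = (c : SWFRing) * w) ↔
      (∃ lam : ℤ, x = (lam : SWFRing) * 2 ^ k * w)) ∧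
    (∀ m : ℕ, (2 : SWFRing) ^ m * w ∈ Ideal.span {z ^ k} → m ≥ k) := by
  constructor
  · intro x hx
    constructor
    · rintro ⟨c, rfl⟩
      have hphi : SWFphi ((c : SWFRing) * w) = 0 := by
        rw [map_mul, SWFphi_w, mul_zero]
      exact SWF_mem_span_zpow hx hphi
    · rintro ⟨lam, rfl⟩
      exact ⟨lam * 2 ^ k, by push_cast; ring⟩
  · intro m hm
    have hphi : SWFphi ((2 : SWFRing) ^ m * w) = 0 := by
      rw [map_mul, SWFphi_w, mul_zero]
    obtain ⟨c, hc⟩ := SWF_mem_span_zpow hm hphi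
    have hpsi := congrArg SWFpsi hc
    rw [map_mul, map_mul, map_mul, map_pow, map_pow, SWFpsi_w] at hpsi
    have h2 : SWFpsi 2 = 2 := by rw [map_ofNat]
    rw [h2] at hpsi
    have hint : SWFpsi ((c : SWFRing)) = c := by rw [map_intCast]; exact Int.cast_id
    rw [hint] at hpsi
    -- hpsi : 2 ^ m * 2 = c * 2 ^ k * 2
    have hdvd : (2 : ℤ) ^ k ∣ 2 ^ m := by
      refine ⟨c, ?_⟩
      have := mul_right_cancel₀ (by norm_num : (2:ℤ) ≠ 0) hpsi
      linarith
    have : ((2 ^ k : ℕ) : ℤ) ∣ ((2 ^ m : ℕ) : ℤ) := by push_cast; exact hdvd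
    have := Int.ofNat_dvd.mp this
    exact (Nat.pow_dvd_pow_iff_le_right (by norm_num)).mp this
end
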